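/- Let b ≥ 1 and J_b := (−2b−1, −2b) ∪ (0,1). For every v ∈ H^{1/2}(ℝ) with v = 0 a.e. on ℝ∖J_b and v ≥ 0 on J_b, one has −(1/(π b²))·‖v‖_{L¹((0,1))}·‖v‖_{L¹((−2b−1,−2b))} ≤ ℰ(v) ≤ (1/(2π))·[v]²_{H^{1/2}(ℝ)}, where ℰ(v) := ∫_ℝ∫_ℝ (v(x)−v(y))²·K(x,y) dx dy. -/

import Mathlib

open MeasureTheory Filter Set

/-- Squared Gagliardo `H^{1/2}` seminorm, `[v]² = ∫∫ (v(x)-v(y))²/(x-y)² dx dy`,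
as a lower integral (so that finiteness expresses membership of the homogeneous space). -/
noncomputable def gagliardoSq (v : ℝ → ℝ) : ENNReal :=
  ∫⁻ x : ℝ, ∫⁻ y : ℝ, ENNReal.ofReal ((v x - v y) ^ 2 / (x - y) ^ 2)

/-- `v ∈ H^{1/2}(ℝ)`: `v ∈ L²(ℝ)` and the Gagliardo seminorm is finite. -/
def MemH12 (v : ℝ → ℝ) : Prop :=
  MeasureTheory.MemLp v 2 MeasureTheory.volume ∧ gagliardoSq v < ⊤

/-- The fractional deformation kernel associated to `Υ(t) = max{t,0}`:
`K(x,y) = 0` if `xy > 0` and `K(x,y) = (1/2π)(1 - 2 max{x,y}/|x-y|)/(x-y)²` if `xy < 0`. -/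
noncomputable def Kker (x y : ℝ) : ℝ :=
  if x * y < 0 then 1 / (2 * Real.pi) * (1 - 2 * max x y / |x - y|) / (x - y) ^ 2 else 0

section KkerLemmas

open Topology

lemma Kker_symm (x y : ℝ) : Kker x y = Kker y x := by
  unfold Kker
  rw [mul_comm, max_comm, abs_sub_comm]
  ring_nf

lemma Kker_zero {x y : ℝ} (h : ¬ x * y < 0) : Kker x y = 0 := if_neg h

lemma Kker_of_lt {x y : ℝ} (hx : x < 0) (hy : 0 < y) :
    Kker x y = 1 / (2 * Real.pi) * (-x - y) / (y - x) ^ 3 := by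
  have hxy : x * y < 0 := mul_neg_of_neg_of_pos hx hy
  have h1 : max x y = y := max_eq_right (le_of_lt (hx.trans hy))
  have h2 : |x - y| = y - x := by rw [abs_sub_comm]; exact abs_of_pos (by linarith)
  have h3 : (x - y) ^ 2 = (y - x) ^ 2 := by ring
  rw [Kker, if_pos hxy, h1, h2, h3]
  have h4 : y - x ≠ 0 := by intro h; linarith [hx.trans hy]
  have hpi := Real.pi_ne_zero
  field_simp
  ring

lemma Kker_of_gt {x y : ℝ} (hx : 0 < x) (hy : y < 0) :
    Kker x y = 1 / (2 * Real.pi) * (-x - y) / (x - y) ^ 3 := by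
  rw [Kker_symm]
  rw [Kker_of_lt hy hx]
  ring_nf

lemma Kker_neg_neg {x y : ℝ} : Kker (-x) (-y) = - Kker x y := by
  rcases lt_trichotomy (x * y) 0 with h | h | h
  · rcases mul_neg_iff.mp h with ⟨hx, hy⟩ | ⟨hx, hy⟩
    · rw [Kker_of_gt hx hy, Kker_of_lt (by linarith : -x < 0) (by linarith : (0:ℝ) < -y)]
      ring
    · rw [Kker_of_lt hx hy, Kker_of_gt (by linarith : (0:ℝ) < -x) (by linarith : -y < 0)]
      ring
  · rw [Kker_zero (by rw [neg_mul_neg, h]; exact lt_irrefl 0),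
      Kker_zero (by rw [h]; exact lt_irrefl 0), neg_zero]
  · rw [Kker_zero (by rw [neg_mul_neg]; exact not_lt.mpr h.le),
      Kker_zero (not_lt.mpr h.le), neg_zero]

lemma Kker_Ioi {x : ℝ} (hx : x < 0) :
    IntegrableOn (Kker x) (Ioi 0) volume ∧ (∫ y in Ioi 0, Kker x y) = 0 := by
  have hpos := Real.pi_pos
  set c : ℝ := 1 / (2 * Real.pi) with hc
  have hcpos : 0 < c := by positivity
  have hne : ∀ y : ℝ, y ∈ Ici (0:ℝ) → y - x ≠ 0 := by
    intro y hy h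
    rw [sub_eq_zero] at h
    have : (0:ℝ) ≤ y := hy
    linarith [h ▸ this]
  have hd1 : ∀ y ∈ Ici (0:ℝ), HasDerivAt (fun y => c * x * ((y - x) ^ 2)⁻¹)
      (-(2 * c * x) / (y - x) ^ 3) y := by
    intro y hy
    have h0 := hne y hy
    have hbase : HasDerivAt (fun y : ℝ => (y - x) ^ 2) (2 * (y - x)) y := by
      simpa using ((hasDerivAt_id y).sub_const x).fun_pow 2
    have h := (hbase.inv (pow_ne_zero 2 h0)).const_mul (c * x)
    refine h.congr_deriv ?_
    field_simp
  have hd2 : ∀ y ∈ Ici (0:ℝ), HasDerivAt (fun y => c * (y - x)⁻¹)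
      (-c / (y - x) ^ 2) y := by
    intro y hy
    have h0 := hne y hy
    have hbase : HasDerivAt (fun y : ℝ => (y - x)) 1 y := (hasDerivAt_id y).sub_const x
    have h := (hbase.inv h0).const_mul c
    refine h.congr_deriv ?_
    field_simp
  have htend_aux : Tendsto (fun y : ℝ => y - x) atTop atTop :=
    tendsto_atTop_add_const_right _ (-x) tendsto_id
  have ht1 : Tendsto (fun y : ℝ => c * x * ((y - x) ^ 2)⁻¹) atTop (𝓝 0) := by
    have h : Tendsto (fun y : ℝ => ((y - x) ^ 2)⁻¹) atTop (𝓝 0) :=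
      tendsto_inv_atTop_zero.comp ((tendsto_pow_atTop (two_ne_zero)).comp htend_aux)
    simpa using h.const_mul (c * x)
  have ht2 : Tendsto (fun y : ℝ => c * (y - x)⁻¹) atTop (𝓝 0) := by
    have h : Tendsto (fun y : ℝ => (y - x)⁻¹) atTop (𝓝 0) :=
      tendsto_inv_atTop_zero.comp htend_aux
    simpa using h.const_mul c
  have hint1 : IntegrableOn (fun y : ℝ => -(2 * c * x) / (y - x) ^ 3) (Ioi 0) volume :=
    integrableOn_Ioi_deriv_of_nonneg' hd1 (fun y hy => by
      have h1 : (0:ℝ) < y - x := by have : (0:ℝ) < y := hy; linarith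
      have hnum : (0:ℝ) ≤ -(2 * c * x) := by nlinarith
      positivity) ht1
  have hint2 : IntegrableOn (fun y : ℝ => -c / (y - x) ^ 2) (Ioi 0) volume :=
    integrableOn_Ioi_deriv_of_nonpos' hd2 (fun y hy => by
      have h1 : (0:ℝ) < y - x := by have : (0:ℝ) < y := hy; linarith
      exact div_nonpos_of_nonpos_of_nonneg (by linarith) (by positivity)) ht2
  have hv1 : (∫ y in Ioi 0, -(2 * c * x) / (y - x) ^ 3)
      = 0 - c * x * ((0 - x) ^ 2)⁻¹ :=
    integral_Ioi_of_hasDerivAt_of_tendsto' hd1 hint1 ht1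
  have hv2 : (∫ y in Ioi 0, -c / (y - x) ^ 2) = 0 - c * (0 - x)⁻¹ :=
    integral_Ioi_of_hasDerivAt_of_tendsto' hd2 hint2 ht2
  have heq : EqOn (fun y : ℝ => -(2 * c * x) / (y - x) ^ 3 + -c / (y - x) ^ 2)
      (Kker x) (Ioi 0) := by
    intro y hy
    have hy0 : (0:ℝ) < y := hy
    have h0 : y - x ≠ 0 := hne y (le_of_lt hy0)
    rw [Kker_of_lt hx hy0, ← hc]
    field_simp
    ring
  have hintK : IntegrableOn (Kker x) (Ioi 0) volume :=
    (IntegrableOn.congr_fun (hint1.add hint2) heq measurableSet_Ioi)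
  refine ⟨hintK, ?_⟩
  have h : (∫ y in Ioi 0, Kker x y)
      = ∫ y in Ioi 0, (-(2 * c * x) / (y - x) ^ 3 + -c / (y - x) ^ 2) :=
    (setIntegral_congr_fun measurableSet_Ioi heq).symm
  rw [h, integral_add hint1 hint2, hv1, hv2]
  have hx0 : x ≠ 0 := ne_of_lt hx
  field_simp
  ring

lemma Kker_int {x : ℝ} (hx : x ≠ 0) :
    Integrable (Kker x) volume ∧ (∫ y, Kker x y) = 0 := by
  have main : ∀ z : ℝ, z < 0 → Integrable (Kker z) volume ∧ (∫ y, Kker z y) = 0 := by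
    intro z hz
    obtain ⟨hint, hval⟩ := Kker_Ioi hz
    have hzero : EqOn (Kker z) 0 (Iic 0) := by
      intro y hy
      have : ¬ z * y < 0 := not_lt.mpr (by nlinarith [hy.out] : (0:ℝ) ≤ z * y)
      simpa using Kker_zero this
    have hintIic : IntegrableOn (Kker z) (Iic 0) volume :=
      (integrableOn_zero).congr_fun hzero.symm measurableSet_Iic
    have hunion : IntegrableOn (Kker z) (Iic 0 ∪ Ioi 0) volume := hintIic.union hint
    rw [Iic_union_Ioi] at hunion
    rw [integrableOn_univ] at hunion
    refine ⟨hunion, ?_⟩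
    have : (∫ y, Kker z y) = (∫ y in Iic 0, Kker z y) + ∫ y in Ioi 0, Kker z y := by
      rw [← setIntegral_union (Iic_disjoint_Ioi le_rfl) measurableSet_Ioi hintIic hint,
        Iic_union_Ioi, setIntegral_univ]
    rw [this, hval, setIntegral_congr_fun measurableSet_Iic hzero]
    simp
  rcases hx.lt_or_gt with h | h
  · exact main x h
  · obtain ⟨hint, hval⟩ := main (-x) (by linarith)
    have hkey : Kker x = fun y => -(Kker (-x) (-y)) := by
      funext y
      have := Kker_neg_neg (x := x) (y := y)
      linarith
    have hcompneg : Integrable (fun y => Kker (-x) (-y)) volume := by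
      have h2 := (measurableEmbedding_neg (α := ℝ)).integrable_map_iff
        (g := Kker (-x)) (μ := volume)
      rw [Measure.map_neg_eq_self] at h2
      exact h2.mp hint
    constructor
    · rw [hkey]; exact hcompneg.neg
    · rw [hkey]
      rw [integral_neg]
      rw [integral_neg_eq_self (Kker (-x)) volume, hval, neg_zero]

lemma Kker_abs_le_of_lt {x y : ℝ} (hx : x < 0) (hy : 0 < y) :
    |Kker x y| ≤ 1 / (2 * Real.pi) / (x - y) ^ 2 := by
  have hpi := Real.pi_pos
  have hd : (0:ℝ) < y - x := by linarith
  rw [Kker_of_lt hx hy, show (x - y) ^ 2 = (y - x) ^ 2 by ring, abs_div, abs_mul,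
    abs_of_nonneg (by positivity : (0:ℝ) ≤ 1 / (2 * Real.pi)),
    abs_of_pos (by positivity : (0:ℝ) < (y - x) ^ 3)]
  have habs : |-x - y| ≤ y - x := abs_le.mpr ⟨by linarith, by linarith⟩
  calc 1 / (2 * Real.pi) * |-x - y| / (y - x) ^ 3
      ≤ 1 / (2 * Real.pi) * (y - x) / (y - x) ^ 3 := by gcongr
    _ = 1 / (2 * Real.pi) / (y - x) ^ 2 := by
        have h0 : y - x ≠ 0 := ne_of_gt hd
        field_simp

lemma Kker_abs_le (x y : ℝ) : |Kker x y| ≤ 1 / (2 * Real.pi) / (x - y) ^ 2 := by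
  have hpi := Real.pi_pos
  by_cases h : x * y < 0
  · rcases mul_neg_iff.mp h with ⟨hx, hy⟩ | ⟨hx, hy⟩
    · rw [Kker_symm, show (x - y) ^ 2 = (y - x) ^ 2 by ring]
      exact Kker_abs_le_of_lt hy hx
    · exact Kker_abs_le_of_lt hx hy
  · rw [Kker_zero h, abs_zero]
    positivity

lemma Kker_le (x y : ℝ) : Kker x y ≤ 1 / (2 * Real.pi) / (x - y) ^ 2 :=
  (le_abs_self _).trans (Kker_abs_le x y)

lemma Kker_abs_le_AB {b x y : ℝ} (hb : 1 ≤ b) (hx : x ∈ Ioo (-2 * b - 1) (-2 * b))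
    (hy : y ∈ Ioo (0:ℝ) 1) : |Kker x y| ≤ 1 / (2 * Real.pi) / (2 * b) ^ 2 := by
  have hpi := Real.pi_pos
  obtain ⟨hx1, hx2⟩ := hx
  obtain ⟨hy1, hy2⟩ := hy
  have hxneg : x < 0 := by nlinarith
  have hd : (0:ℝ) < y - x := by linarith
  have hnum : (0:ℝ) < -x - y := by nlinarith
  rw [Kker_of_lt hxneg hy1, abs_div, abs_mul,
    abs_of_nonneg (by positivity : (0:ℝ) ≤ 1 / (2 * Real.pi)),
    abs_of_pos (by positivity : (0:ℝ) < (y - x) ^ 3), abs_of_pos hnum]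
  have hxb : 2 * b < -x := by linarith
  have hmx : (0:ℝ) < -x := by linarith
  calc 1 / (2 * Real.pi) * (-x - y) / (y - x) ^ 3
      ≤ 1 / (2 * Real.pi) * (-x) / (-x) ^ 3 := by
        apply div_le_div₀ (by positivity)
          (mul_le_mul_of_nonneg_left (by linarith) (by positivity))
          (pow_pos hmx 3) (pow_le_pow_left₀ hmx.le (by linarith) 3)
    _ = 1 / (2 * Real.pi) / (-x) ^ 2 := by
        have h0 : x ≠ 0 := by intro h; rw [h] at hmx; simp at hmx
        field_simp
    _ ≤ 1 / (2 * Real.pi) / (2 * b) ^ 2 := by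
        apply div_le_div₀ (by positivity) (le_refl _) (by positivity)
          (pow_le_pow_left₀ (by positivity) (by linarith) 2)

lemma Kker_meas : Measurable (fun p : ℝ × ℝ => Kker p.1 p.2) := by
  unfold Kker
  refine Measurable.ite ?_ ?_ measurable_const
  · exact measurableSet_lt (measurable_fst.mul measurable_snd) measurable_const
  · apply Measurable.div
    · apply Measurable.mul measurable_const
      apply Measurable.sub measurable_const
      exact (measurable_const.mul (measurable_fst.max measurable_snd)).div
        (measurable_fst.sub measurable_snd).abs
    · exact ((measurable_fst.sub measurable_snd).pow_const 2)

end KkerLemmas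

set_option maxHeartbeats 2000000 in
/-- Two-sided bound for the deformation energy `ℰ(v) = ∫∫ (v(x)-v(y))² K(x,y) dx dy`
of nonnegative functions supported in `J_b = (-2b-1,-2b) ∪ (0,1)`. -/
theorem deformation_energy_bounds (b : ℝ) (hb : 1 ≤ b) (v : ℝ → ℝ)
    (hv : MemH12 v)
    (hv0 : ∀ᵐ x ∂MeasureTheory.volume,
      x ∉ Ioo (-2 * b - 1) (-2 * b) ∪ Ioo (0:ℝ) 1 → v x = 0)
    (hvpos : ∀ x ∈ Ioo (-2 * b - 1) (-2 * b) ∪ Ioo (0:ℝ) 1, 0 ≤ v x) :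
    (-(1 / (Real.pi * b ^ 2)) * (∫ x in Ioo (0:ℝ) 1, |v x|) *
        (∫ x in Ioo (-2 * b - 1) (-2 * b), |v x|)
      ≤ ∫ x : ℝ, ∫ y : ℝ, (v x - v y) ^ 2 * Kker x y) ∧
    ((∫ x : ℝ, ∫ y : ℝ, (v x - v y) ^ 2 * Kker x y)
      ≤ 1 / (2 * Real.pi) * ∫ x : ℝ, ∫ y : ℝ, (v x - v y) ^ 2 / (x - y) ^ 2) := by
  classical
  have hpi := Real.pi_pos
  obtain ⟨hL2, hGag⟩ := hv
  set A : Set ℝ := Ioo (-2 * b - 1) (-2 * b) with hA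
  set B : Set ℝ := Ioo (0:ℝ) 1 with hB
  have hAm : MeasurableSet A := measurableSet_Ioo
  have hBm : MeasurableSet B := measurableSet_Ioo
  have hJm : MeasurableSet (A ∪ B) := hAm.union hBm
  have hAneg : ∀ x ∈ A, x < 0 := fun x hx => by
    have := hx.2
    nlinarith [hx.2]
  have hBpos : ∀ x ∈ B, 0 < x ∧ x < 1 := fun x hx => ⟨hx.1, hx.2⟩
  -- measurable representative
  set w0 : ℝ → ℝ := hL2.aestronglyMeasurable.mk v with hw0def
  have hw0m : Measurable w0 := hL2.aestronglyMeasurable.stronglyMeasurable_mk.measurable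
  have hw0e : v =ᵐ[volume] w0 := hL2.aestronglyMeasurable.ae_eq_mk
  set w : ℝ → ℝ := fun x => if x ∈ A ∪ B then max (w0 x) 0 else 0 with hwdef
  have hwm : Measurable w := Measurable.ite hJm (hw0m.max measurable_const) measurable_const
  have hvw : v =ᵐ[volume] w := by
    filter_upwards [hw0e, hv0] with x h1 h2
    by_cases hx : x ∈ A ∪ B
    · simp only [hwdef, if_pos hx, ← h1]
      exact (max_eq_left (hvpos x hx)).symm
    · simp only [hwdef, if_neg hx]
      exact h2 hx
  have hwnn : ∀ x, 0 ≤ w x := fun x => by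
    simp only [hwdef]
    split_ifs
    · exact le_max_right _ _
    · exact le_rfl
  have hwne : ∀ x, w x ≠ 0 → x ∈ A ∪ B := by
    intro x hx
    by_contra h
    exact hx (by simp only [hwdef, if_neg h])
  -- L² facts
  have hwL2 : MemLp w 2 volume := hL2.ae_eq hvw
  have hsq : Integrable (fun x => w x ^ 2) volume := hwL2.integrable_sq
  have habs_int : ∀ s : Set ℝ, MeasurableSet s → volume s < ⊤ →
      IntegrableOn (fun x => |w x|) s volume := by
    intro s hs hμ
    have hconst : IntegrableOn (fun _ : ℝ => (1:ℝ)) s volume :=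
      (integrableOn_const_iff).mpr (Or.inr hμ)
    apply Integrable.mono' ((hsq.integrableOn).add hconst)
      ((hwm.abs).aestronglyMeasurable.restrict)
    apply ae_of_all
    intro x
    simp only [Pi.add_apply]
    rw [Real.norm_eq_abs, abs_abs]
    nlinarith [sq_nonneg (|w x| - 1), sq_abs (w x), abs_nonneg (w x)]
  have hwA : IntegrableOn (fun x => |w x|) A volume := habs_int A hAm measure_Ioo_lt_top
  have hwB : IntegrableOn (fun x => |w x|) B volume := habs_int B hBm measure_Ioo_lt_top
  set φA : ℝ → ℝ := A.indicator (fun x => |w x|) with hφA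
  set φB : ℝ → ℝ := B.indicator (fun x => |w x|) with hφB
  have hφAint : Integrable φA volume := hwA.integrable_indicator hAm
  have hφBint : Integrable φB volume := hwB.integrable_indicator hBm
  have hφAnn : ∀ x, 0 ≤ φA x := fun x => indicator_nonneg (fun y _ => abs_nonneg _) x
  have hφBnn : ∀ x, 0 ≤ φB x := fun x => indicator_nonneg (fun y _ => abs_nonneg _) x
  -- product space functions
  set F : ℝ × ℝ → ℝ := fun p => (w p.1 - w p.2) ^ 2 * Kker p.1 p.2 with hF
  set G : ℝ × ℝ → ℝ := fun p => (w p.1 - w p.2) ^ 2 / (p.1 - p.2) ^ 2 with hG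
  set G1 : ℝ × ℝ → ℝ := fun p => w p.1 ^ 2 * Kker p.1 p.2 with hG1
  set G2 : ℝ × ℝ → ℝ := fun p => w p.2 ^ 2 * Kker p.1 p.2 with hG2
  set G3 : ℝ × ℝ → ℝ := fun p => w p.1 * w p.2 * Kker p.1 p.2 with hG3
  have hw1m : Measurable (fun p : ℝ × ℝ => w p.1) := hwm.comp measurable_fst
  have hw2m : Measurable (fun p : ℝ × ℝ => w p.2) := hwm.comp measurable_snd
  have hFm : Measurable F := ((hw1m.sub hw2m).pow_const 2).mul Kker_meas
  have hGm : Measurable G := ((hw1m.sub hw2m).pow_const 2).div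
    ((measurable_fst.sub measurable_snd).pow_const 2)
  have hG1m : Measurable G1 := (hw1m.pow_const 2).mul Kker_meas
  have hG2m : Measurable G2 := (hw2m.pow_const 2).mul Kker_meas
  have hG3m : Measurable G3 := (hw1m.mul hw2m).mul Kker_meas
  -- Gagliardo seminorm of w, on the product space
  have hGagw : (∫⁻ x, ∫⁻ y, ENNReal.ofReal ((w x - w y) ^ 2 / (x - y) ^ 2)) < ⊤ := by
    have heq : (∫⁻ x, ∫⁻ y, ENNReal.ofReal ((w x - w y) ^ 2 / (x - y) ^ 2))
        = gagliardoSq v := by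
      rw [gagliardoSq]
      apply lintegral_congr_ae
      filter_upwards [hvw] with x hx
      apply lintegral_congr_ae
      filter_upwards [hvw] with y hy
      rw [hx, hy]
    rw [heq]
    exact hGag
  have hGprod : (∫⁻ p, ENNReal.ofReal (G p) ∂(volume.prod volume)) < ⊤ := by
    rw [lintegral_prod _ ((hGm.ennreal_ofReal).aemeasurable)]
    exact hGagw
  have hGint : Integrable G (volume.prod volume) := by
    refine ⟨hGm.aestronglyMeasurable, ?_⟩
    rw [hasFiniteIntegral_iff_ofReal (ae_of_all _ (fun p => div_nonneg (sq_nonneg _) (sq_nonneg _)))]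
    exact hGprod
  have hGnn : ∀ p : ℝ × ℝ, 0 ≤ G p := fun p => div_nonneg (sq_nonneg _) (sq_nonneg _)
  have hFle : ∀ p : ℝ × ℝ, |F p| ≤ 1 / (2 * Real.pi) * G p := by
    intro p
    have h1 : |F p| = (w p.1 - w p.2) ^ 2 * |Kker p.1 p.2| := by
      rw [hF, abs_mul, abs_of_nonneg (sq_nonneg _)]
    rw [h1]
    calc (w p.1 - w p.2) ^ 2 * |Kker p.1 p.2|
        ≤ (w p.1 - w p.2) ^ 2 * (1 / (2 * Real.pi) / (p.1 - p.2) ^ 2) :=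
          mul_le_mul_of_nonneg_left (Kker_abs_le _ _) (sq_nonneg _)
      _ = 1 / (2 * Real.pi) * G p := by rw [hG]; ring
  have hFint : Integrable F (volume.prod volume) :=
    Integrable.mono' (hGint.const_mul (1 / (2 * Real.pi))) hFm.aestronglyMeasurable
      (ae_of_all _ (fun p => by rw [Real.norm_eq_abs]; exact hFle p))
  -- constant M
  set M : ℝ := 1 / (2 * Real.pi) / (2 * b) ^ 2 with hM
  have hMpos : 0 < M := by positivity
  -- the dominating function for G3
  set H : ℝ × ℝ → ℝ := fun p => M * (φA p.1 * φB p.2) + M * (φB p.1 * φA p.2) with hH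
  have hHint : Integrable H (volume.prod volume) :=
    (((hφAint.mul_prod hφBint).const_mul M).add ((hφBint.mul_prod hφAint).const_mul M))
  have hHnn : ∀ p, 0 ≤ H p := fun p => by
    have := hφAnn p.1; have := hφBnn p.2; have := hφBnn p.1; have := hφAnn p.2
    simp only [hH]
    positivity
  have hdisj : ∀ x : ℝ, x ∈ A → x ∉ B := by
    intro x hx hxB
    exact absurd (hBpos x hxB).1 (not_lt.mpr (hAneg x hx).le)
  have hG3le : ∀ p : ℝ × ℝ, |G3 p| ≤ H p := by
    intro ⟨x, y⟩
    by_cases hk : x * y < 0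
    · by_cases hwx : w x = 0
      · simp only [hG3, hwx]
        simpa using hHnn (x, y)
      by_cases hwy : w y = 0
      · simp only [hG3, hwy]
        simpa using hHnn (x, y)
      have hxJ := hwne x hwx
      have hyJ := hwne y hwy
      have habs : |G3 (x, y)| = |w x| * |w y| * |Kker x y| := by
        simp only [hG3, abs_mul]
      rcases hxJ with hxA | hxB
      · rcases hyJ with hyA | hyB
        · exact absurd hk (not_lt.mpr (by nlinarith [hAneg x hxA, hAneg y hyA]))
        · have hKb : |Kker x y| ≤ M := Kker_abs_le_AB hb hxA hyB
          have : |G3 (x, y)| ≤ M * (φA x * φB y) := by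
            rw [habs, hφA, hφB, indicator_of_mem hxA, indicator_of_mem hyB]
            calc |w x| * |w y| * |Kker x y| ≤ |w x| * |w y| * M :=
                  mul_le_mul_of_nonneg_left hKb (by positivity)
              _ = M * (|w x| * |w y|) := by ring
          refine this.trans ?_
          simp only [hH]
          have := mul_nonneg (hφBnn x) (hφAnn y)
          nlinarith [hMpos]
      · rcases hyJ with hyA | hyB
        · have hKb : |Kker x y| ≤ M := by
            rw [Kker_symm]
            exact Kker_abs_le_AB hb hyA hxB
          have : |G3 (x, y)| ≤ M * (φB x * φA y) := by
            rw [habs, hφA, hφB, indicator_of_mem hxB, indicator_of_mem hyA]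
            calc |w x| * |w y| * |Kker x y| ≤ |w x| * |w y| * M :=
                  mul_le_mul_of_nonneg_left hKb (by positivity)
              _ = M * (|w x| * |w y|) := by ring
          refine this.trans ?_
          simp only [hH]
          have := mul_nonneg (hφAnn x) (hφBnn y)
          nlinarith [hMpos]
        · exact absurd hk (not_lt.mpr (by nlinarith [(hBpos x hxB).1, (hBpos y hyB).1]))
    · simp only [hG3, Kker_zero hk, mul_zero, abs_zero]
      exact hHnn (x, y)
  have hG3int : Integrable G3 (volume.prod volume) :=
    Integrable.mono' hHint hG3m.aestronglyMeasurable
      (ae_of_all _ (fun p => by rw [Real.norm_eq_abs]; exact hG3le p))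
  -- integrability of G1 (and G2 by symmetry)
  set S : Set (ℝ × ℝ) := {p : ℝ × ℝ | w p.2 = 0} with hS
  have hSm : MeasurableSet S := hw2m (measurableSet_singleton 0)
  set HH : ℝ × ℝ → ℝ := fun p => M * ((A ∪ B).indicator (fun x => w x ^ 2) p.1 *
    (A ∪ B).indicator (fun _ => (1:ℝ)) p.2) with hHH
  have hHHint : Integrable HH (volume.prod volume) := by
    apply Integrable.const_mul
    apply Integrable.mul_prod
    · exact (hsq.integrableOn).integrable_indicator hJm
    · rw [integrable_indicator_iff hJm]
      apply (integrableOn_const_iff).mpr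
      right
      calc volume (A ∪ B) ≤ volume A + volume B := measure_union_le _ _
        _ < ⊤ := ENNReal.add_lt_top.mpr ⟨measure_Ioo_lt_top, measure_Ioo_lt_top⟩
  have hKabs_M : ∀ x y : ℝ, x ∈ A ∪ B → y ∈ A ∪ B → x * y < 0 → |Kker x y| ≤ M := by
    intro x y hx hy hk
    rcases hx with hxA | hxB
    · rcases hy with hyA | hyB
      · exact absurd hk (not_lt.mpr (by nlinarith [hAneg x hxA, hAneg y hyA]))
      · exact Kker_abs_le_AB hb hxA hyB
    · rcases hy with hyA | hyB
      · rw [Kker_symm]; exact Kker_abs_le_AB hb hyA hxB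
      · exact absurd hk (not_lt.mpr (by nlinarith [(hBpos x hxB).1, (hBpos y hyB).1]))
  have hG1int : Integrable G1 (volume.prod volume) := by
    have h1 : IntegrableOn G1 S (volume.prod volume) := by
      apply IntegrableOn.congr_fun (hFint.integrableOn) _ hSm
      intro p hp
      have hp2 : w p.2 = 0 := hp
      simp only [hF, hG1, hp2, sub_zero]
    have h2 : IntegrableOn G1 Sᶜ (volume.prod volume) := by
      apply Integrable.mono' (hHHint.integrableOn) (hG1m.aestronglyMeasurable.restrict)
      rw [ae_restrict_iff' hSm.compl]
      apply ae_of_all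
      intro ⟨x, y⟩ hp
      have hwy : w y ≠ 0 := hp
      have hyJ : y ∈ A ∪ B := hwne y hwy
      rw [Real.norm_eq_abs]
      by_cases hk : x * y < 0
      · by_cases hwx : w x = 0
        · simp only [hG1, hwx, ne_eq, OfNat.ofNat_ne_zero, not_false_eq_true, zero_pow,
            zero_mul, abs_zero]
          simp only [hHH]
          have h0 : (0:ℝ) ≤ (A ∪ B).indicator (fun x => w x ^ 2) x :=
            indicator_nonneg (fun z _ => sq_nonneg _) x
          have h1 : (0:ℝ) ≤ (A ∪ B).indicator (fun _ => (1:ℝ)) y :=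
            indicator_nonneg (fun z _ => zero_le_one) y
          positivity
        · have hxJ : x ∈ A ∪ B := hwne x hwx
          have hKb := hKabs_M x y hxJ hyJ hk
          simp only [hG1, hHH, abs_mul, abs_of_nonneg (sq_nonneg (w x)),
            indicator_of_mem hxJ, indicator_of_mem hyJ, mul_one]
          calc w x ^ 2 * |Kker x y| ≤ w x ^ 2 * M :=
                mul_le_mul_of_nonneg_left hKb (sq_nonneg _)
            _ = M * w x ^ 2 := by ring
      · simp only [hG1, Kker_zero hk, mul_zero, abs_zero]
        simp only [hHH]
        have h0 : (0:ℝ) ≤ (A ∪ B).indicator (fun x => w x ^ 2) x :=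
          indicator_nonneg (fun z _ => sq_nonneg _) x
        have h1 : (0:ℝ) ≤ (A ∪ B).indicator (fun _ => (1:ℝ)) y :=
          indicator_nonneg (fun z _ => zero_le_one) y
        positivity
    have := h1.union h2
    rwa [union_compl_self, integrableOn_univ] at this
  have hG2int : Integrable G2 (volume.prod volume) := by
    have h := hG1int.swap
    apply h.congr
    apply ae_of_all
    intro p
    simp only [Function.comp_apply, hG1, hG2, Prod.fst_swap, Prod.snd_swap]
    rw [Kker_symm]
  -- ∫ G1 = 0 and ∫ G2 = 0
  have hae0 : ∀ᵐ x : ℝ ∂volume, x ≠ 0 := by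
    rw [ae_iff]
    have h : {x : ℝ | ¬ x ≠ 0} = {0} := by ext t; simp
    rw [h]
    exact Real.volume_singleton
  have hinner0 : ∀ x : ℝ, x ≠ 0 → (∫ y, w x ^ 2 * Kker x y) = 0 := by
    intro x hx
    rw [integral_const_mul, (Kker_int hx).2, mul_zero]
  have hG1val : (∫ p, G1 p ∂(volume.prod volume)) = 0 := by
    have hIt := integral_integral (f := fun x y => w x ^ 2 * Kker x y)
      (by exact hG1int)
    rw [← hIt]
    apply integral_eq_zero_of_ae
    filter_upwards [hae0] with x hx
    exact hinner0 x hx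
  have hG2val : (∫ p, G2 p ∂(volume.prod volume)) = 0 := by
    have hswap : (∫ p : ℝ × ℝ, G1 p.swap ∂(volume.prod volume))
        = ∫ p, G1 p ∂(volume.prod volume) := integral_prod_swap G1
    have hcongr : (∫ p, G2 p ∂(volume.prod volume))
        = ∫ p : ℝ × ℝ, G1 p.swap ∂(volume.prod volume) := by
      apply integral_congr_ae
      apply ae_of_all
      intro p
      simp only [hG1, hG2, Prod.fst_swap, Prod.snd_swap]
      rw [Kker_symm]
    rw [hcongr, hswap, hG1val]
  -- decomposition
  have hFval : (∫ p, F p ∂(volume.prod volume))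
      = -2 * ∫ p, G3 p ∂(volume.prod volume) := by
    have hFeq : F = fun p => (G1 p + G2 p) - 2 * G3 p := by
      funext p
      simp only [hF, hG1, hG2, hG3]
      ring
    rw [hFeq]
    have e1 : (∫ p, ((G1 p + G2 p) - 2 * G3 p) ∂(volume.prod volume))
        = (∫ p, (G1 p + G2 p) ∂(volume.prod volume))
          - ∫ p, 2 * G3 p ∂(volume.prod volume) :=
      integral_sub (by exact hG1int.add hG2int) (by exact hG3int.const_mul 2)
    have e2 : (∫ p, (G1 p + G2 p) ∂(volume.prod volume))
        = (∫ p, G1 p ∂(volume.prod volume)) + ∫ p, G2 p ∂(volume.prod volume) :=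
      integral_add (by exact hG1int) (by exact hG2int)
    rw [e1, e2, hG1val, hG2val, integral_const_mul]
    ring
  -- bound on ∫ G3
  have hG3bd : (∫ p, G3 p ∂(volume.prod volume))
      ≤ 2 * M * ((∫ x in A, |w x|) * (∫ x in B, |w x|)) := by
    have h1 : (∫ p, G3 p ∂(volume.prod volume)) ≤ ∫ p, H p ∂(volume.prod volume) :=
      integral_mono hG3int hHint (fun p => (le_abs_self _).trans (hG3le p))
    have h2 : (∫ p, H p ∂(volume.prod volume))
        = M * ((∫ x, φA x) * (∫ x, φB x)) + M * ((∫ x, φB x) * (∫ x, φA x)) := by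
      rw [hH]
      rw [integral_add ((hφAint.mul_prod hφBint).const_mul M)
        ((hφBint.mul_prod hφAint).const_mul M), integral_const_mul, integral_const_mul,
        integral_prod_mul, integral_prod_mul]
    have hφAv : (∫ x, φA x) = ∫ x in A, |w x| := integral_indicator hAm
    have hφBv : (∫ x, φB x) = ∫ x in B, |w x| := integral_indicator hBm
    rw [h2, hφAv, hφBv] at h1
    calc (∫ p, G3 p ∂(volume.prod volume)) ≤ _ := h1
      _ = 2 * M * ((∫ x in A, |w x|) * (∫ x in B, |w x|)) := by ring
  -- identification of the iterated integrals in the statement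
  have hiterF : (∫ x : ℝ, ∫ y : ℝ, (v x - v y) ^ 2 * Kker x y)
      = ∫ p, F p ∂(volume.prod volume) := by
    have h1 : (∫ x : ℝ, ∫ y : ℝ, (v x - v y) ^ 2 * Kker x y)
        = ∫ x : ℝ, ∫ y : ℝ, (w x - w y) ^ 2 * Kker x y := by
      apply integral_congr_ae
      filter_upwards [hvw] with x hx
      apply integral_congr_ae
      filter_upwards [hvw] with y hy
      rw [hx, hy]
    rw [h1]
    exact integral_integral (f := fun x y => (w x - w y) ^ 2 * Kker x y) (by exact hFint)
  have hiterG : (∫ x : ℝ, ∫ y : ℝ, (v x - v y) ^ 2 / (x - y) ^ 2)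
      = ∫ p, G p ∂(volume.prod volume) := by
    have h1 : (∫ x : ℝ, ∫ y : ℝ, (v x - v y) ^ 2 / (x - y) ^ 2)
        = ∫ x : ℝ, ∫ y : ℝ, (w x - w y) ^ 2 / (x - y) ^ 2 := by
      apply integral_congr_ae
      filter_upwards [hvw] with x hx
      apply integral_congr_ae
      filter_upwards [hvw] with y hy
      rw [hx, hy]
    rw [h1]
    exact integral_integral (f := fun x y => (w x - w y) ^ 2 / (x - y) ^ 2) (by exact hGint)
  have hIA : (∫ x in Ioo (-2 * b - 1) (-2 * b), |v x|) = ∫ x in A, |w x| := by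
    apply integral_congr_ae
    filter_upwards [ae_restrict_of_ae hvw] with x hx
    rw [hx]
  have hIB : (∫ x in Ioo (0:ℝ) 1, |v x|) = ∫ x in B, |w x| := by
    apply integral_congr_ae
    filter_upwards [ae_restrict_of_ae hvw] with x hx
    rw [hx]
  have hIAnn : 0 ≤ ∫ x in A, |w x| := setIntegral_nonneg hAm (fun x _ => abs_nonneg _)
  have hIBnn : 0 ≤ ∫ x in B, |w x| := setIntegral_nonneg hBm (fun x _ => abs_nonneg _)
  constructor
  · -- lower bound
    rw [hiterF, hIA, hIB, hFval]
    set IA : ℝ := ∫ x in A, |w x|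
    set IB : ℝ := ∫ x in B, |w x|
    have h1 : -2 * (∫ p, G3 p ∂(volume.prod volume)) ≥ -2 * (2 * M * (IA * IB)) := by
      have := hG3bd
      linarith
    refine le_trans ?_ h1
    have hMval : 2 * (2 * M * (IA * IB)) = 1 / (2 * Real.pi * b ^ 2) * (IA * IB) := by
      rw [hM]
      field_simp
    have hcoef : 1 / (2 * Real.pi * b ^ 2) ≤ 1 / (Real.pi * b ^ 2) := by
      apply div_le_div_of_nonneg_left one_pos.le (by positivity)
      nlinarith
    nlinarith [mul_nonneg hIAnn hIBnn, hcoef, hMval,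
      mul_le_mul_of_nonneg_right hcoef (mul_nonneg hIAnn hIBnn)]
  · -- upper bound
    rw [hiterF, hiterG, hFval]
    have h1 : (∫ p, F p ∂(volume.prod volume))
        ≤ ∫ p, 1 / (2 * Real.pi) * G p ∂(volume.prod volume) :=
      integral_mono hFint (hGint.const_mul _) (fun p => (le_abs_self _).trans (hFle p))
    rw [integral_const_mul] at h1
    rw [← hFval]
    exact h1
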